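/- (Frequency propagation for elastic networks, spring-constant rule.) Let V = EuclideanSpace ℝ (Fin M) (state of the M spring extensions r), let E_nl : V → ℝ be C³, let C : V → ℝ be C², and for parameters k, ℓ : Fin M → ℝ define the elastic energy E (k,ℓ) r = (1/2)·Σ_e k e · (r e − ℓ e)² + E_nl r. Let r⋆ : ((Fin M → ℝ) × (Fin M → ℝ)) → ℝ → V be C³ jointly, satisfying for all (k,ℓ) and β the equilibrium condition gradient (fun r => E (k,ℓ) r + β·C r) (r⋆ (k,ℓ) β) = 0. Let L (k,ℓ) = C (r⋆ (k,ℓ) 0), let ω > 0, T = 2π/ω, and define a(γ) = (1/T)·∫₀ᵀ r⋆ (k,ℓ) (γ·sin(ωt)) dt and b(γ) = (2/T)·∫₀ᵀ sin(ωt) • r⋆ (k,ℓ) (γ·sin(ωt)) dt. Then for every fixed (k,ℓ) and every spring e ∈ Fin M, the function γ ↦ b(γ) e · (a(γ) e − ℓ e) − γ·(∂L/∂(k e)) is big-O of γ³ as γ → 0, where ∂L/∂(k e) denotes the partial derivative of L with respect to the spring constant k e. -/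

import Mathlib

open MeasureTheory


private lemma isBigO_step {E : Type*} [NormedAddCommGroup E] [NormedSpace ℝ E]
    {g g' : ℝ → E} {k : ℕ} (h0 : g 0 = 0)
    (hderiv : ∀ β, HasDerivAt g (g' β) β)
    (hO : g' =O[nhds 0] fun β : ℝ => β ^ k) :
    g =O[nhds 0] fun β : ℝ => β ^ (k + 1) := by
  rw [Asymptotics.isBigO_iff] at hO
  obtain ⟨c, hc⟩ := hO
  rw [Metric.eventually_nhds_iff] at hc
  obtain ⟨δ, hδ, hball⟩ := hc
  rw [Asymptotics.isBigO_iff]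
  refine ⟨|c|, Metric.eventually_nhds_iff.mpr ⟨δ, hδ, fun {β} hβ => ?_⟩⟩
  have hβ' : |β| < δ := by simpa [Real.dist_eq] using hβ
  have key : ‖g β - g 0‖ ≤ (|c| * |β| ^ k) * ‖β - 0‖ := by
    apply Convex.norm_image_sub_le_of_norm_hasDerivWithin_le
      (f' := g') (s := Set.uIcc 0 β)
    · intro x _; exact (hderiv x).hasDerivWithinAt
    · intro x hx
      have hxβ : |x| ≤ |β| := by
        rw [Set.uIcc, Set.mem_Icc] at hx
        rw [abs_le]
        constructor
        · exact le_trans (le_inf (neg_nonpos.mpr (abs_nonneg β)) (neg_abs_le β)) hx.1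
        · exact le_trans hx.2 (sup_le (abs_nonneg β) (le_abs_self β))
      have hxδ : dist x (0 : ℝ) < δ := by
        rw [Real.dist_eq, sub_zero]; exact lt_of_le_of_lt hxβ hβ'
      calc ‖g' x‖ ≤ c * ‖x ^ k‖ := hball hxδ
        _ ≤ |c| * |β| ^ k := by
            rw [Real.norm_eq_abs, abs_pow]
            have := pow_le_pow_left₀ (abs_nonneg x) hxβ k
            nlinarith [abs_nonneg x, pow_nonneg (abs_nonneg x) k,
              le_abs_self c, abs_nonneg c, pow_nonneg (abs_nonneg β) k]
    · exact convex_uIcc 0 β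
    · exact Set.left_mem_uIcc
    · exact Set.right_mem_uIcc
  rw [h0, sub_zero, sub_zero] at key
  calc ‖g β‖ ≤ (|c| * |β| ^ k) * ‖β‖ := key
    _ = |c| * ‖β ^ (k+1)‖ := by
        rw [Real.norm_eq_abs, Real.norm_eq_abs, abs_pow, pow_succ]; ring

private lemma taylor3_isBigO {E : Type*} [NormedAddCommGroup E] [NormedSpace ℝ E]
    {φ : ℝ → E} (hφ : ContDiff ℝ 3 φ) :
    (fun β : ℝ => φ β - φ 0 - β • deriv φ 0 - (β ^ 2 / 2) • deriv (deriv φ) 0)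
      =O[nhds 0] fun β : ℝ => β ^ 3 := by
  have h3 : (3 : WithTop ℕ∞) = 2 + 1 := by norm_num
  have hφ1 : ContDiff ℝ 2 (deriv φ) := by
    have := (contDiff_succ_iff_deriv (n := 2)).mp (h3 ▸ hφ)
    exact this.2.2
  have hφ2 : ContDiff ℝ 1 (deriv (deriv φ)) := by
    have h2 : (2 : WithTop ℕ∞) = 1 + 1 := by norm_num
    exact ((contDiff_succ_iff_deriv (n := 1)).mp (h2 ▸ hφ1)).2.2
  have hφ3 : Continuous (deriv (deriv (deriv φ))) :=
    (contDiff_one_iff_deriv.mp hφ2).2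
  set φ1 := deriv φ
  set φ2 := deriv φ1
  set φ3 := deriv φ2
  have hdφ : ∀ β, HasDerivAt φ (φ1 β) β := fun β =>
    (hφ.differentiable (by norm_num) β).hasDerivAt
  have hdφ1 : ∀ β, HasDerivAt φ1 (φ2 β) β := fun β =>
    (hφ1.differentiable (by norm_num) β).hasDerivAt
  have hdφ2 : ∀ β, HasDerivAt φ2 (φ3 β) β := fun β =>
    (hφ2.differentiable (by norm_num) β).hasDerivAt
  -- second remainder
  have hO2 : (fun β : ℝ => φ2 β - φ2 0) =O[nhds 0] fun β : ℝ => β ^ 1 := by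
    apply isBigO_step (g' := φ3) (by simp)
    · intro β; exact (hdφ2 β).sub_const _
    · have : Filter.Tendsto φ3 (nhds 0) (nhds (φ3 0)) := hφ3.continuousAt
      simpa using this.isBigO_one ℝ
  have hO1 : (fun β : ℝ => φ1 β - φ1 0 - β • φ2 0) =O[nhds 0] fun β : ℝ => β ^ 2 := by
    apply isBigO_step (g' := fun β => φ2 β - φ2 0) (by simp)
    · intro β
      simpa using ((hdφ1 β).sub_const (φ1 0)).fun_sub ((hasDerivAt_id β).smul_const (φ2 0))
    · exact hO2
  apply isBigO_step (g' := fun β => φ1 β - φ1 0 - β • φ2 0) (by simp)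
  · intro β
    have h1 : HasDerivAt (fun β : ℝ => β • φ1 0) ((1:ℝ) • φ1 0) β :=
      (hasDerivAt_id β).smul_const (φ1 0)
    have h2 : HasDerivAt (fun β : ℝ => (β ^ 2 / 2) • φ2 0) ((β : ℝ) • φ2 0) β := by
      have hq : HasDerivAt (fun β : ℝ => β ^ 2 / 2) β β := by
        simpa using (hasDerivAt_pow 2 β).div_const 2
      simpa using hq.smul_const (φ2 0)
    have := (((hdφ β).sub_const (φ 0)).fun_sub h1).fun_sub h2
    simpa [one_smul, sub_sub] using this
  · exact hO1

private lemma sin_int1 {ω T : ℝ} (hω : 0 < ω) (hT : T = 2 * Real.pi / ω) :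
    ∫ t in (0:ℝ)..T, Real.sin (ω * t) = 0 := by
  have hωT : ω * T = 2 * Real.pi := by rw [hT]; field_simp
  rw [intervalIntegral.integral_comp_mul_left (fun x => Real.sin x) hω.ne']
  simp [hωT, integral_sin, Real.cos_two_pi]

private lemma sin_int2 {ω T : ℝ} (hω : 0 < ω) (hT : T = 2 * Real.pi / ω) :
    ∫ t in (0:ℝ)..T, Real.sin (ω * t) ^ 2 = T / 2 := by
  have hωT : ω * T = 2 * Real.pi := by rw [hT]; field_simp
  rw [intervalIntegral.integral_comp_mul_left (fun x => Real.sin x ^ 2) hω.ne']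
  rw [mul_zero, hωT, integral_sin_sq]
  simp [Real.sin_two_pi, Real.cos_two_pi, hT]
  field_simp

private lemma sin_int3 {ω T : ℝ} (hω : 0 < ω) (hT : T = 2 * Real.pi / ω) :
    ∫ t in (0:ℝ)..T, Real.sin (ω * t) ^ 3 = 0 := by
  have hωT : ω * T = 2 * Real.pi := by rw [hT]; field_simp
  rw [intervalIntegral.integral_comp_mul_left (fun x => Real.sin x ^ 3) hω.ne']
  have : (3 : ℕ) = 1 + 2 := by norm_num
  rw [mul_zero, hωT, this, integral_sin_pow]
  simp [Real.sin_two_pi, Real.cos_two_pi, integral_sin]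

private lemma eucl_abs_le {M : ℕ} (x : EuclideanSpace ℝ (Fin M)) (e : Fin M) : |x e| ≤ ‖x‖ := by
  rw [EuclideanSpace.norm_eq]
  have h1 : |x e| = Real.sqrt (‖x e‖ ^ 2) := by
    rw [Real.norm_eq_abs, Real.sqrt_sq_eq_abs, abs_abs]
  rw [h1]
  apply Real.sqrt_le_sqrt
  exact Finset.single_le_sum (f := fun i => ‖x i‖ ^ 2)
    (fun i _ => sq_nonneg _) (Finset.mem_univ e)

set_option maxHeartbeats 2000000 in
/-- Frequency propagation for elastic networks, spring-constant rule:
with elastic energy `E (k,ℓ) r = (1/2)·Σ_e k_e (r_e − ℓ_e)² + E_nl r`, equilibrium state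
`r⋆`, loss `L (k,ℓ) = C (r⋆ (k,ℓ) 0)`, and Fourier coefficients `a(γ)`, `b(γ)` of the
response, for each spring `e`:
`b(γ)_e·(a(γ)_e − ℓ_e) − γ·∂L/∂k_e = O(γ³)` as `γ → 0`. -/
theorem stmt14 {M : ℕ}
    (Enl : EuclideanSpace ℝ (Fin M) → ℝ) (hEnl : ContDiff ℝ 3 Enl)
    (C : EuclideanSpace ℝ (Fin M) → ℝ) (hC : ContDiff ℝ 2 C)
    (E : (Fin M → ℝ) × (Fin M → ℝ) → EuclideanSpace ℝ (Fin M) → ℝ)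
    (hEdef : ∀ (kl : (Fin M → ℝ) × (Fin M → ℝ)) (r : EuclideanSpace ℝ (Fin M)),
      E kl r = (1 / 2) * ∑ e, kl.1 e * (r e - kl.2 e) ^ 2 + Enl r)
    (rstar : (Fin M → ℝ) × (Fin M → ℝ) → ℝ → EuclideanSpace ℝ (Fin M))
    (hr : ContDiff ℝ 3 (fun q : ((Fin M → ℝ) × (Fin M → ℝ)) × ℝ => rstar q.1 q.2))
    (heq : ∀ (kl : (Fin M → ℝ) × (Fin M → ℝ)) (β : ℝ),
      gradient (fun r => E kl r + β * C r) (rstar kl β) = 0)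
    (L : (Fin M → ℝ) × (Fin M → ℝ) → ℝ) (hL : ∀ kl, L kl = C (rstar kl 0))
    (ω T : ℝ) (hω : 0 < ω) (hT : T = 2 * Real.pi / ω)
    (kl : (Fin M → ℝ) × (Fin M → ℝ))
    (a b : ℝ → EuclideanSpace ℝ (Fin M))
    (ha : ∀ γ : ℝ, a γ = (1 / T) • ∫ t in (0 : ℝ)..T, rstar kl (γ * Real.sin (ω * t)))
    (hb : ∀ γ : ℝ,
      b γ = (2 / T) • ∫ t in (0 : ℝ)..T, Real.sin (ω * t) • rstar kl (γ * Real.sin (ω * t)))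
    (e : Fin M) :
    Asymptotics.IsBigO (nhds (0 : ℝ))
      (fun γ : ℝ =>
        b γ e * (a γ e - kl.2 e) -
          γ * fderiv ℝ L kl (Pi.single e 1, 0))
      (fun γ : ℝ => γ ^ 3) := by
  classical
  have hTpos : 0 < T := by rw [hT]; positivity
  set φ : ℝ → EuclideanSpace ℝ (Fin M) := fun β => rstar kl β with hφdef
  have hφ : ContDiff ℝ 3 φ := by
    rw [hφdef]; exact hr.comp (contDiff_const.prodMk contDiff_id)
  set r₀ : EuclideanSpace ℝ (Fin M) := φ 0 with hr₀def
  set r₁ : EuclideanSpace ℝ (Fin M) := deriv φ 0 with hr₁def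
  set r₂ : EuclideanSpace ℝ (Fin M) := deriv (deriv φ) 0 with hr₂def
  set ρ : ℝ → EuclideanSpace ℝ (Fin M) :=
    fun x => φ x - r₀ - x • r₁ - (x ^ 2 / 2) • r₂ with hρdef
  have hρO : ρ =O[nhds 0] fun x : ℝ => x ^ 3 := by
    rw [hρdef, hr₀def, hr₁def, hr₂def]; exact taylor3_isBigO hφ
  rw [Asymptotics.isBigO_iff] at hρO
  obtain ⟨c₀, hc₀⟩ := hρO
  rw [Metric.eventually_nhds_iff] at hc₀
  obtain ⟨δ, hδpos, hball⟩ := hc₀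
  set c : ℝ := |c₀| with hcdef
  have hc : 0 ≤ c := abs_nonneg _
  have hρbound : ∀ x : ℝ, |x| < δ → ‖ρ x‖ ≤ c * |x| ^ 3 := by
    intro x hx
    have h := hball (by simpa [Real.dist_eq] using hx)
    calc ‖ρ x‖ ≤ c₀ * ‖x ^ 3‖ := h
      _ ≤ c * |x| ^ 3 := by
          rw [Real.norm_eq_abs, abs_pow]
          nlinarith [le_abs_self c₀, pow_nonneg (abs_nonneg x) 3]
  have hφc : Continuous φ := hφ.continuous
  have hρc : Continuous ρ := by
    rw [hρdef]
    apply Continuous.sub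
    apply Continuous.sub
    apply Continuous.sub hφc continuous_const
    · exact continuous_id.smul continuous_const
    · exact ((continuous_pow 2).div_const 2).smul continuous_const
  set ρe : ℝ → ℝ := fun x => ρ x e with hρedef
  have hρec : Continuous ρe := by
    rw [hρedef]
    exact (EuclideanSpace.proj (𝕜 := ℝ) e).continuous.comp hρc
  have hρebound : ∀ x : ℝ, |x| < δ → |ρe x| ≤ c * |x| ^ 3 := by
    intro x hx
    exact le_trans (eucl_abs_le (ρ x) e) (hρbound x hx)
  have hcomp : ∀ x : ℝ, φ x e = r₀ e + r₁ e * x + r₂ e / 2 * x ^ 2 + ρe x := by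
    intro x
    rw [hρedef, hρdef]
    simp only [PiLp.sub_apply, PiLp.smul_apply, smul_eq_mul]
    ring
  have hproj : ∀ (F : ℝ → EuclideanSpace ℝ (Fin M)), Continuous F →
      (∫ t in (0:ℝ)..T, F t) e = ∫ t in (0:ℝ)..T, F t e := by
    intro F hF
    have := ContinuousLinearMap.intervalIntegral_comp_comm
      (EuclideanSpace.proj (𝕜 := ℝ) e) (hF.intervalIntegrable (μ := volume) 0 T)
    simpa using this.symm
  have hsinc : Continuous fun t : ℝ => Real.sin (ω * t) := by fun_prop
  have hρgc : ∀ γ : ℝ, Continuous fun t : ℝ => ρe (γ * Real.sin (ω * t)) := by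
    intro γ
    apply hρec.comp
    fun_prop
  have hint1 := sin_int1 hω hT
  have hint2 := sin_int2 hω hT
  have hint3 := sin_int3 hω hT
  have haγ : ∀ γ : ℝ, a γ e = r₀ e + γ ^ 2 / 4 * r₂ e
      + (1 / T) * ∫ t in (0:ℝ)..T, ρe (γ * Real.sin (ω * t)) := by
    intro γ
    have h0 : a γ e = (1 / T) * (∫ t in (0:ℝ)..T, φ (γ * Real.sin (ω * t))) e := by
      rw [ha γ]
      rw [hφdef]
      simp [PiLp.smul_apply]
    have hFc : Continuous fun t : ℝ => φ (γ * Real.sin (ω * t)) :=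
      hφc.comp (by fun_prop)
    rw [h0, hproj (fun t : ℝ => φ (γ * Real.sin (ω * t))) hFc]
    have hpt : (fun t : ℝ => φ (γ * Real.sin (ω * t)) e)
        = fun t : ℝ => r₀ e + ((r₁ e * γ) * Real.sin (ω * t)
          + ((r₂ e / 2 * γ ^ 2) * Real.sin (ω * t) ^ 2
          + ρe (γ * Real.sin (ω * t)))) := by
      funext t
      rw [hcomp (γ * Real.sin (ω * t))]
      ring
    rw [hpt]
    rw [intervalIntegral.integral_add (Continuous.intervalIntegrable (by fun_prop) 0 T) (by
      apply IntervalIntegrable.add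
      · exact Continuous.intervalIntegrable (by fun_prop) 0 T
      · apply IntervalIntegrable.add
        · exact Continuous.intervalIntegrable (by fun_prop) 0 T
        · exact (hρgc γ).intervalIntegrable 0 T),
      intervalIntegral.integral_add (Continuous.intervalIntegrable (by fun_prop) 0 T) (by
        apply IntervalIntegrable.add
        · exact Continuous.intervalIntegrable (by fun_prop) 0 T
        · exact (hρgc γ).intervalIntegrable 0 T),
      intervalIntegral.integral_add (Continuous.intervalIntegrable (by fun_prop) 0 T) ((hρgc γ).intervalIntegrable 0 T)]
    rw [intervalIntegral.integral_const, intervalIntegral.integral_const_mul,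
      intervalIntegral.integral_const_mul, hint1, hint2]
    rw [smul_eq_mul]
    field_simp [hTpos.ne']
    ring
  have hbγ : ∀ γ : ℝ, b γ e = γ * r₁ e
      + (2 / T) * ∫ t in (0:ℝ)..T, Real.sin (ω * t) * ρe (γ * Real.sin (ω * t)) := by
    intro γ
    have h0 : b γ e = (2 / T) *
        (∫ t in (0:ℝ)..T, Real.sin (ω * t) • φ (γ * Real.sin (ω * t))) e := by
      rw [hb γ]
      rw [hφdef]
      simp [PiLp.smul_apply]
    have hFc : Continuous fun t : ℝ => Real.sin (ω * t) • φ (γ * Real.sin (ω * t)) :=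
      Continuous.smul hsinc (hφc.comp (by fun_prop))
    rw [h0, hproj (fun t : ℝ => Real.sin (ω * t) • φ (γ * Real.sin (ω * t))) hFc]
    have hpt : (fun t : ℝ => (Real.sin (ω * t) • φ (γ * Real.sin (ω * t))) e)
        = fun t : ℝ => r₀ e * Real.sin (ω * t) + ((r₁ e * γ) * Real.sin (ω * t) ^ 2
          + ((r₂ e / 2 * γ ^ 2) * Real.sin (ω * t) ^ 3
          + Real.sin (ω * t) * ρe (γ * Real.sin (ω * t)))) := by
      funext t
      rw [PiLp.smul_apply, smul_eq_mul, hcomp (γ * Real.sin (ω * t))]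
      ring
    rw [hpt]
    have hsρc : Continuous fun t : ℝ => Real.sin (ω * t) * ρe (γ * Real.sin (ω * t)) :=
      hsinc.mul (hρgc γ)
    rw [intervalIntegral.integral_add (Continuous.intervalIntegrable (by fun_prop) 0 T) (by
      apply IntervalIntegrable.add
      · exact Continuous.intervalIntegrable (by fun_prop) 0 T
      · apply IntervalIntegrable.add
        · exact Continuous.intervalIntegrable (by fun_prop) 0 T
        · exact hsρc.intervalIntegrable 0 T),
      intervalIntegral.integral_add (Continuous.intervalIntegrable (by fun_prop) 0 T) (by
        apply IntervalIntegrable.add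
        · exact Continuous.intervalIntegrable (by fun_prop) 0 T
        · exact hsρc.intervalIntegrable 0 T),
      intervalIntegral.integral_add (Continuous.intervalIntegrable (by fun_prop) 0 T) (hsρc.intervalIntegrable 0 T)]
    rw [intervalIntegral.integral_const_mul, intervalIntegral.integral_const_mul,
      intervalIntegral.integral_const_mul, hint1, hint2, hint3]
    field_simp [hTpos.ne']
    ring
  have hRa : ∀ γ : ℝ, |γ| < δ →
      |∫ t in (0:ℝ)..T, ρe (γ * Real.sin (ω * t))| ≤ c * |γ| ^ 3 * T := by
    intro γ hγ
    have hbnd : ∀ t ∈ Set.uIoc (0:ℝ) T, ‖ρe (γ * Real.sin (ω * t))‖ ≤ c * |γ| ^ 3 := by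
      intro t _
      have hs : |γ * Real.sin (ω * t)| ≤ |γ| := by
        rw [abs_mul]
        nlinarith [Real.abs_sin_le_one (ω * t), abs_nonneg γ, abs_nonneg (Real.sin (ω*t))]
      have h2 := hρebound (γ * Real.sin (ω * t)) (lt_of_le_of_lt hs hγ)
      rw [Real.norm_eq_abs]
      calc |ρe (γ * Real.sin (ω * t))| ≤ c * |γ * Real.sin (ω * t)| ^ 3 := h2
        _ ≤ c * |γ| ^ 3 := by
            apply mul_le_mul_of_nonneg_left _ hc
            exact pow_le_pow_left₀ (abs_nonneg _) hs 3
    have hnn := intervalIntegral.norm_integral_le_of_norm_le_const hbnd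
    rw [Real.norm_eq_abs] at hnn
    calc |∫ t in (0:ℝ)..T, ρe (γ * Real.sin (ω * t))| ≤ c * |γ| ^ 3 * |T - 0| := hnn
      _ = c * |γ| ^ 3 * T := by rw [sub_zero, abs_of_pos hTpos]
  have hRb : ∀ γ : ℝ, |γ| < δ →
      |∫ t in (0:ℝ)..T, Real.sin (ω * t) * ρe (γ * Real.sin (ω * t))| ≤ c * |γ| ^ 3 * T := by
    intro γ hγ
    have hbnd : ∀ t ∈ Set.uIoc (0:ℝ) T,
        ‖Real.sin (ω * t) * ρe (γ * Real.sin (ω * t))‖ ≤ c * |γ| ^ 3 := by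
      intro t _
      have hs : |γ * Real.sin (ω * t)| ≤ |γ| := by
        rw [abs_mul]
        nlinarith [Real.abs_sin_le_one (ω * t), abs_nonneg γ, abs_nonneg (Real.sin (ω*t))]
      have h2 := hρebound (γ * Real.sin (ω * t)) (lt_of_le_of_lt hs hγ)
      rw [Real.norm_eq_abs, abs_mul]
      calc |Real.sin (ω * t)| * |ρe (γ * Real.sin (ω * t))|
          ≤ 1 * (c * |γ * Real.sin (ω * t)| ^ 3) :=
            mul_le_mul (Real.abs_sin_le_one _) h2 (abs_nonneg _) zero_le_one
        _ ≤ c * |γ| ^ 3 := by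
            rw [one_mul]
            apply mul_le_mul_of_nonneg_left _ hc
            exact pow_le_pow_left₀ (abs_nonneg _) hs 3
    have hnn := intervalIntegral.norm_integral_le_of_norm_le_const hbnd
    rw [Real.norm_eq_abs] at hnn
    calc |∫ t in (0:ℝ)..T, Real.sin (ω * t) * ρe (γ * Real.sin (ω * t))|
        ≤ c * |γ| ^ 3 * |T - 0| := hnn
      _ = c * |γ| ^ 3 * T := by rw [sub_zero, abs_of_pos hTpos]
  have ha1 : (fun γ : ℝ => a γ e - r₀ e) =O[nhds 0] fun γ : ℝ => γ ^ 2 := by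
    rw [Asymptotics.isBigO_iff]
    refine ⟨|r₂ e| / 4 + c, Metric.eventually_nhds_iff.mpr
      ⟨min δ 1, lt_min hδpos one_pos, fun {γ} hγ => ?_⟩⟩
    have hγ' : |γ| < min δ 1 := by simpa [Real.dist_eq] using hγ
    have hγδ : |γ| < δ := lt_of_lt_of_le hγ' (min_le_left _ _)
    have hγ1 : |γ| ≤ 1 := le_of_lt (lt_of_lt_of_le hγ' (min_le_right _ _))
    have h1 := hRa γ hγδ
    have h3 : |γ| ^ 3 ≤ |γ| ^ 2 := by nlinarith [abs_nonneg γ]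
    rw [Real.norm_eq_abs, Real.norm_eq_abs, abs_pow]
    have heqn : a γ e - r₀ e = γ ^ 2 / 4 * r₂ e
        + (1 / T) * ∫ t in (0:ℝ)..T, ρe (γ * Real.sin (ω * t)) := by
      rw [haγ γ]; ring
    rw [heqn]
    have hint : |(1 / T) * ∫ t in (0:ℝ)..T, ρe (γ * Real.sin (ω * t))| ≤ c * |γ| ^ 3 := by
      rw [abs_mul, abs_div, abs_one, abs_of_pos hTpos]
      calc 1 / T * |∫ t in (0:ℝ)..T, ρe (γ * Real.sin (ω * t))|
          ≤ 1 / T * (c * |γ| ^ 3 * T) := by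
            apply mul_le_mul_of_nonneg_left h1
            positivity
        _ = c * |γ| ^ 3 := by field_simp
    calc |γ ^ 2 / 4 * r₂ e + (1 / T) * ∫ t in (0:ℝ)..T, ρe (γ * Real.sin (ω * t))|
        ≤ |γ ^ 2 / 4 * r₂ e|
          + |(1 / T) * ∫ t in (0:ℝ)..T, ρe (γ * Real.sin (ω * t))| := abs_add_le _ _
      _ ≤ |γ| ^ 2 / 4 * |r₂ e| + c * |γ| ^ 3 := by
          apply add_le_add _ hint
          rw [abs_mul, abs_div, abs_pow]
          simp
      _ ≤ (|r₂ e| / 4 + c) * |γ| ^ 2 := by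
          nlinarith [abs_nonneg (r₂ e), abs_nonneg γ, mul_le_mul_of_nonneg_left h3 hc]
  have hbO : (fun γ : ℝ => b γ e - γ * r₁ e) =O[nhds 0] fun γ : ℝ => γ ^ 3 := by
    rw [Asymptotics.isBigO_iff]
    refine ⟨2 * c, Metric.eventually_nhds_iff.mpr ⟨δ, hδpos, fun {γ} hγ => ?_⟩⟩
    have hγδ : |γ| < δ := by simpa [Real.dist_eq] using hγ
    have h1 := hRb γ hγδ
    rw [Real.norm_eq_abs, Real.norm_eq_abs, abs_pow]
    have heqn : b γ e - γ * r₁ e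
        = (2 / T) * ∫ t in (0:ℝ)..T, Real.sin (ω * t) * ρe (γ * Real.sin (ω * t)) := by
      rw [hbγ γ]; ring
    rw [heqn, abs_mul, abs_div, abs_two, abs_of_pos hTpos]
    calc 2 / T * |∫ t in (0:ℝ)..T, Real.sin (ω * t) * ρe (γ * Real.sin (ω * t))|
        ≤ 2 / T * (c * |γ| ^ 3 * T) := by
          apply mul_le_mul_of_nonneg_left h1
          positivity
      _ = 2 * c * |γ| ^ 3 := by field_simp
  have hkey : fderiv ℝ L kl (Pi.single e 1, 0) = r₁ e * (r₀ e - kl.2 e) := by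
    -- setup
    set P : Fin M → ℝ := Pi.single e 1 with hPdef
    set ψ : ℝ → EuclideanSpace ℝ (Fin M) := fun s => rstar (kl.1 + s • P, kl.2) 0 with hψdef
    have hψ : ContDiff ℝ 3 ψ := by
      rw [hψdef]
      exact hr.comp (((contDiff_const.add (contDiff_id.smul contDiff_const)).prodMk
        contDiff_const).prodMk contDiff_const)
    have hψ0 : ψ 0 = r₀ := by
      rw [hψdef, hr₀def, hφdef]
      simp
    set u : EuclideanSpace ℝ (Fin M) := deriv ψ 0 with hudef
    have hψd : HasDerivAt ψ u 0 := (hψ.differentiable (by norm_num) 0).hasDerivAt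
    have hφd : HasDerivAt φ r₁ 0 := (hφ.differentiable (by norm_num) 0).hasDerivAt
    -- gradient = 0 gives fderiv = 0
    have hF0 : ∀ (kl' : (Fin M → ℝ) × (Fin M → ℝ)) (β : ℝ),
        fderiv ℝ (fun r => E kl' r + β * C r) (rstar kl' β) = 0 := by
      intro kl' β
      have h := heq kl' β
      unfold gradient at h
      exact (LinearIsometryEquiv.map_eq_zero_iff _).mp h
    -- derivative of Enl
    set DEnl : EuclideanSpace ℝ (Fin M) → (EuclideanSpace ℝ (Fin M) →L[ℝ] ℝ) :=
      fderiv ℝ Enl with hDEnldef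
    have hDEnl : ContDiff ℝ 2 DEnl := hEnl.fderiv_right (by norm_num)
    have hEnld : ∀ r, HasFDerivAt Enl (DEnl r) r := fun r =>
      (hEnl.differentiable (by norm_num) r).hasFDerivAt
    -- derivative of E kl'
    have hEd : ∀ (kl' : (Fin M → ℝ) × (Fin M → ℝ)) (r : EuclideanSpace ℝ (Fin M)),
        HasFDerivAt (E kl')
          ((∑ i, (kl'.1 i * (r i - kl'.2 i)) • (EuclideanSpace.proj (𝕜 := ℝ) i)) + DEnl r) r := by
      intro kl' r
      have hfun : E kl' = fun r' : EuclideanSpace ℝ (Fin M) =>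
          (1/2 : ℝ) * ∑ i, kl'.1 i * (r' i - kl'.2 i) ^ 2 + Enl r' := by
        funext r'; exact hEdef kl' r'
      rw [hfun]
      apply HasFDerivAt.add _ (hEnld r)
      have hsum : HasFDerivAt
          (fun r' : EuclideanSpace ℝ (Fin M) => ∑ i, kl'.1 i * (r' i - kl'.2 i) ^ 2)
          (∑ i, (kl'.1 i * (2 * (r i - kl'.2 i))) • (EuclideanSpace.proj (𝕜 := ℝ) i)) r := by
        apply HasFDerivAt.fun_sum
        intro i _
        have hq : HasDerivAt (fun x : ℝ => kl'.1 i * (x - kl'.2 i) ^ 2)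
            (kl'.1 i * (2 * (r i - kl'.2 i))) (r i) := by
          have h1 : HasDerivAt (fun x : ℝ => (x - kl'.2 i) ^ 2)
              (2 * (r i - kl'.2 i)) (r i) := by
            simpa using ((hasDerivAt_id (r i)).sub_const (kl'.2 i)).fun_pow 2
          simpa [mul_comm] using h1.const_mul (kl'.1 i)
        exact hq.comp_hasFDerivAt (h₂ := fun x : ℝ => kl'.1 i * (x - kl'.2 i) ^ 2) r (EuclideanSpace.proj (𝕜 := ℝ) i).hasFDerivAt
      have h2 : HasFDerivAt
          (fun r' : EuclideanSpace ℝ (Fin M) => (1/2 : ℝ) * ∑ i, kl'.1 i * (r' i - kl'.2 i) ^ 2)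
          ((1/2 : ℝ) • ∑ i, (kl'.1 i * (2 * (r i - kl'.2 i))) • (EuclideanSpace.proj (𝕜 := ℝ) i)) r :=
        hsum.const_mul (1/2 : ℝ)
      refine h2.congr_fderiv ?_
      rw [Finset.smul_sum]
      refine Finset.sum_congr rfl fun i _ => ?_
      rw [smul_smul]
      congr 1
      ring
    -- equilibrium equations, applied
    have hMain : ∀ (k1 : Fin M → ℝ) (β : ℝ) (w : EuclideanSpace ℝ (Fin M)),
        (∑ i, k1 i * (rstar (k1, kl.2) β i - kl.2 i) * w i)
          + DEnl (rstar (k1, kl.2) β) w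
          + β * fderiv ℝ C (rstar (k1, kl.2) β) w = 0 := by
      intro k1 β w
      have hCd : HasFDerivAt (fun r => β * C r)
          (β • fderiv ℝ C (rstar (k1, kl.2) β)) (rstar (k1, kl.2) β) :=
        ((hC.differentiable (by norm_num) _).hasFDerivAt).const_mul β
      have htot := (hEd (k1, kl.2) (rstar (k1, kl.2) β)).add hCd
      have hD : ((∑ i, (k1 i * (rstar (k1, kl.2) β i - kl.2 i)) •
            (EuclideanSpace.proj (𝕜 := ℝ) i)) + DEnl (rstar (k1, kl.2) β))
          + β • fderiv ℝ C (rstar (k1, kl.2) β) = 0 := by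
        rw [← htot.fderiv]
        exact hF0 (k1, kl.2) β
      have happ := DFunLike.congr_fun hD w
      simpa [ContinuousLinearMap.sum_apply, ContinuousLinearMap.smul_apply,
        smul_eq_mul] using happ
    -- second derivative of Enl at r₀
    have hD2d : HasFDerivAt DEnl (fderiv ℝ DEnl r₀) r₀ :=
      (hDEnl.differentiable (by norm_num) r₀).hasFDerivAt
    set D2 := fderiv ℝ DEnl r₀ with hD2def
    have hsymm : ∀ v z, D2 v z = D2 z v := fun v z =>
      second_derivative_symmetric hEnld hD2d v z
    have hDC : ContDiff ℝ 1 (fderiv ℝ C) := hC.fderiv_right (by norm_num)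
    -- projection derivative helper
    have hpi : ∀ (i : Fin M), HasDerivAt (fun β : ℝ => φ β i) (r₁ i) 0 := by
      intro i
      have h := (EuclideanSpace.proj (𝕜 := ℝ) i).hasFDerivAt.comp_hasDerivAt 0 hφd
      simpa [Function.comp_def] using h
    have hpiψ : ∀ (i : Fin M), HasDerivAt (fun s : ℝ => ψ s i) (u i) 0 := by
      intro i
      have h := (EuclideanSpace.proj (𝕜 := ℝ) i).hasFDerivAt.comp_hasDerivAt 0 hψd
      simpa [Function.comp_def] using h
    -- Equation A
    have hEqA : ∀ w : EuclideanSpace ℝ (Fin M),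
        (∑ i, kl.1 i * r₁ i * w i) + D2 r₁ w + fderiv ℝ C r₀ w = 0 := by
      intro w
      have hAzero : ∀ β : ℝ, (∑ i, kl.1 i * (φ β i - kl.2 i) * w i)
          + DEnl (φ β) w + β * fderiv ℝ C (φ β) w = 0 := by
        intro β
        have h := hMain kl.1 β w
        rw [Prod.mk.eta] at h
        simpa only [hφdef] using h
      have hterm1 : HasDerivAt (fun β : ℝ => ∑ i, kl.1 i * (φ β i - kl.2 i) * w i)
          (∑ i, kl.1 i * r₁ i * w i) 0 := by
        apply HasDerivAt.fun_sum
        intro i _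
        simpa using (((hpi i).sub_const (kl.2 i)).const_mul (kl.1 i)).mul_const (w i)
      have hterm2 : HasDerivAt (fun β : ℝ => DEnl (φ β) w) (D2 r₁ w) 0 := by
        have h1 : HasDerivAt (fun β : ℝ => DEnl (φ β)) (D2 r₁) 0 :=
          hD2d.comp_hasDerivAt 0 hφd
        have h2 := (ContinuousLinearMap.apply ℝ ℝ w).hasFDerivAt.comp_hasDerivAt 0 h1
        simpa [Function.comp_def] using h2
      have hterm3 : HasDerivAt (fun β : ℝ => β * fderiv ℝ C (φ β) w)
          (fderiv ℝ C r₀ w) 0 := by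
        have h1 : HasFDerivAt (fderiv ℝ C) (fderiv ℝ (fderiv ℝ C) r₀) r₀ :=
          (hDC.differentiable (by norm_num) r₀).hasFDerivAt
        have h2 : HasDerivAt (fun β : ℝ => fderiv ℝ C (φ β)) (fderiv ℝ (fderiv ℝ C) r₀ r₁) 0 :=
          h1.comp_hasDerivAt 0 hφd
        have h3 := (ContinuousLinearMap.apply ℝ ℝ w).hasFDerivAt.comp_hasDerivAt 0 h2
        have h4 := (hasDerivAt_id (0:ℝ)).fun_mul h3
        simpa [Function.comp_def] using h4
      have hAder := (hterm1.add hterm2).add hterm3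
      have hzero : HasDerivAt (fun β : ℝ => (∑ i, kl.1 i * (φ β i - kl.2 i) * w i)
          + DEnl (φ β) w + β * fderiv ℝ C (φ β) w) 0 0 := by
        have hfe : (fun β : ℝ => (∑ i, kl.1 i * (φ β i - kl.2 i) * w i)
            + DEnl (φ β) w + β * fderiv ℝ C (φ β) w) = fun _ => (0:ℝ) := funext hAzero
        rw [hfe]
        exact hasDerivAt_const 0 0
      exact (hzero.unique hAder).symm
    -- Equation B
    have hEqB : ∀ w : EuclideanSpace ℝ (Fin M),
        (∑ i, kl.1 i * u i * w i) + D2 u w + (r₀ e - kl.2 e) * w e = 0 := by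
      intro w
      have hBzero : ∀ s : ℝ, (∑ i, (kl.1 i + s * P i) * (ψ s i - kl.2 i) * w i)
          + DEnl (ψ s) w = 0 := by
        intro s
        have h := hMain (kl.1 + s • P) 0 w
        simpa only [hψdef, Pi.add_apply, Pi.smul_apply, smul_eq_mul, zero_mul,
          add_zero] using h
      have hterm1 : HasDerivAt (fun s : ℝ => ∑ i, (kl.1 i + s * P i) * (ψ s i - kl.2 i) * w i)
          (∑ i, (P i * (r₀ i - kl.2 i) + kl.1 i * u i) * w i) 0 := by
        apply HasDerivAt.fun_sum
        intro i _
        have hf : HasDerivAt (fun s : ℝ => kl.1 i + s * P i) (P i) 0 := by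
          simpa using ((hasDerivAt_id (0:ℝ)).mul_const (P i)).const_add (kl.1 i)
        have hg : HasDerivAt (fun s : ℝ => ψ s i - kl.2 i) (u i) 0 :=
          (hpiψ i).sub_const (kl.2 i)
        have h := (hf.mul hg).mul_const (w i)
        have hψ0i : ψ 0 i = r₀ i := by rw [hψ0]
        simpa [hψ0i] using h
      have hterm2 : HasDerivAt (fun s : ℝ => DEnl (ψ s) w) (D2 u w) 0 := by
        have hD2dψ : HasFDerivAt DEnl D2 (ψ 0) := by rw [hψ0]; exact hD2d
        have h1 : HasDerivAt (fun s : ℝ => DEnl (ψ s)) (D2 u) 0 :=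
          hD2dψ.comp_hasDerivAt 0 hψd
        have h2 := (ContinuousLinearMap.apply ℝ ℝ w).hasFDerivAt.comp_hasDerivAt 0 h1
        simpa [Function.comp_def] using h2
      have hBder := hterm1.add hterm2
      have hzero : HasDerivAt (fun s : ℝ => (∑ i, (kl.1 i + s * P i) * (ψ s i - kl.2 i) * w i)
          + DEnl (ψ s) w) 0 0 := by
        have hfe : (fun s : ℝ => (∑ i, (kl.1 i + s * P i) * (ψ s i - kl.2 i) * w i)
            + DEnl (ψ s) w) = fun _ => (0:ℝ) := funext hBzero
        rw [hfe]
        exact hasDerivAt_const 0 0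
      have hval := (hzero.unique hBder).symm
      have hsum : ∑ i, (P i * (r₀ i - kl.2 i) + kl.1 i * u i) * w i
          = (r₀ e - kl.2 e) * w e + ∑ i, kl.1 i * u i * w i := by
        rw [hPdef]
        simp only [add_mul, Finset.sum_add_distrib]
        congr 1
        simp [Pi.single_apply, ite_mul, one_mul, zero_mul, Finset.sum_ite_eq']
      rw [hsum] at hval
      linarith [hval]
    -- chain rule for L
    have hLd : fderiv ℝ L kl (P, (0 : Fin M → ℝ)) = fderiv ℝ C r₀ u := by
      have hLfun : L = fun kl' => C (rstar kl' 0) := funext hL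
      have hσ : ContDiff ℝ 3 (fun kl' : (Fin M → ℝ) × (Fin M → ℝ) => rstar kl' 0) :=
        hr.comp (contDiff_id.prodMk contDiff_const)
      have hLdiff : DifferentiableAt ℝ L kl := by
        rw [hLfun]
        exact (hC.differentiable (by norm_num) _).comp kl (hσ.differentiable (by norm_num) kl)
      have hp : HasDerivAt (fun s : ℝ => ((kl.1 + s • P, kl.2) : (Fin M → ℝ) × (Fin M → ℝ)))
          ((P, 0) : (Fin M → ℝ) × (Fin M → ℝ)) 0 := by
        apply HasDerivAt.prodMk
        · simpa using ((hasDerivAt_id (0:ℝ)).smul_const P).const_add kl.1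
        · exact hasDerivAt_const 0 kl.2
      have hp0 : ((kl.1 + (0:ℝ) • P, kl.2) : (Fin M → ℝ) × (Fin M → ℝ)) = kl := by
        simp
      have h1 : HasDerivAt (fun s : ℝ => L (kl.1 + s • P, kl.2))
          (fderiv ℝ L kl (P, 0)) 0 := by
        have hLf : HasFDerivAt L (fderiv ℝ L kl) ((fun s : ℝ => ((kl.1 + s • P, kl.2) :
            (Fin M → ℝ) × (Fin M → ℝ))) 0) := by
          simp only [hp0]
          exact hLdiff.hasFDerivAt
        exact hLf.comp_hasDerivAt 0 hp
      have h2 : HasDerivAt (fun s : ℝ => C (ψ s)) (fderiv ℝ C r₀ u) 0 := by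
        have hCf : HasFDerivAt C (fderiv ℝ C r₀) (ψ 0) := by
          rw [hψ0]
          exact (hC.differentiable (by norm_num) r₀).hasFDerivAt
        exact hCf.comp_hasDerivAt 0 hψd
      have hfe : (fun s : ℝ => L (kl.1 + s • P, kl.2)) = fun s : ℝ => C (ψ s) := by
        funext s
        rw [hL (kl.1 + s • P, kl.2), hψdef]
      rw [hfe] at h1
      exact h1.unique h2
    -- combine
    have hukey : fderiv ℝ C r₀ u = r₁ e * (r₀ e - kl.2 e) := by
      have hA := hEqA u
      have hB := hEqB r₁
      have hsc : ∑ i, kl.1 i * r₁ i * u i = ∑ i, kl.1 i * u i * r₁ i :=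
        Finset.sum_congr rfl fun i _ => by ring
      have hs := hsymm r₁ u
      have hre : r₁ e * (r₀ e - kl.2 e) = (r₀ e - kl.2 e) * r₁ e := by ring
      rw [hre]
      linarith [hA, hB]
    rw [hLd]
    exact hukey

  have hsplit : (fun γ : ℝ => b γ e * (a γ e - kl.2 e) - γ * fderiv ℝ L kl (Pi.single e 1, 0))
      = fun γ : ℝ => (b γ e - γ * r₁ e) * (a γ e - kl.2 e) + (γ * r₁ e) * (a γ e - r₀ e) := by
    funext γ
    rw [hkey]
    ring
  rw [hsplit]
  apply Asymptotics.IsBigO.add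
  · have htend0 : Filter.Tendsto (fun γ : ℝ => a γ e - r₀ e) (nhds 0) (nhds 0) := by
      apply ha1.trans_tendsto
      have h := (continuous_pow 2).tendsto (0:ℝ)
      simpa using h
    have htend : Filter.Tendsto (fun γ : ℝ => a γ e - kl.2 e) (nhds 0)
        (nhds (0 + (r₀ e - kl.2 e))) := by
      have hfe : (fun γ : ℝ => a γ e - kl.2 e)
          = fun γ => (a γ e - r₀ e) + (r₀ e - kl.2 e) := by funext γ; ring
      rw [hfe]
      exact htend0.add tendsto_const_nhds
    have hA : (fun γ : ℝ => a γ e - kl.2 e) =O[nhds 0] fun _ : ℝ => (1:ℝ) :=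
      htend.isBigO_one ℝ
    simpa using hbO.mul hA
  · have h2 : (fun γ : ℝ => γ * r₁ e) =O[nhds 0] fun γ : ℝ => γ := by
      rw [Asymptotics.isBigO_iff]
      refine ⟨|r₁ e|, Filter.Eventually.of_forall fun γ => ?_⟩
      rw [Real.norm_eq_abs, Real.norm_eq_abs, abs_mul]
      nlinarith [abs_nonneg γ, abs_nonneg (r₁ e)]
    exact (h2.mul ha1).congr (fun x => rfl) (fun x => by ring)
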